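/- Let U, V ⊆ ℝ² be transverse sets and let S₁,…,Sₙ : ℤ²×ℤ² → M_m(ℂ) be Hermitian PSR kernels. Suppose there exist p, q ∈ {1,…,n} such that: for every N > 0 there is C_N > 0 with |S_p(x,y)| ≤ C_N e^{−N d_l(x,∂U) − N d_l(y,∂U)} and |S_q(x,y)| ≤ C_N e^{−N d_l(x,∂V) − N d_l(y,∂V)} for all x,y ∈ ℤ². Then the iterated kernel product S₁·…·Sₙ is given by absolutely convergent sums and Σ_{x,y∈ℤ²} |(S₁·…·Sₙ)(x,y)| < ∞ (so the product is the kernel of a trace-class operator). -/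

import Mathlib

noncomputable section

/-- The lattice ℤ². -/
abbrev Z2 := ℤ × ℤ
/-- The plane ℝ². -/
abbrev R2 := ℝ × ℝ

/-- The ℓ¹ distance on the plane. -/
def d1 (x y : R2) : ℝ := |x.1 - y.1| + |x.2 - y.2|

/-- The ℓ¹ distance from a point to a set. -/
def d1S (x : R2) (S : Set R2) : ℝ := sInf (d1 x '' S)

/-- The logarithmic distance on the plane: d_l(x,y) = ln(1 + d₁(x,y)). -/
def dl (x y : R2) : ℝ := Real.log (1 + d1 x y)

/-- The logarithmic distance from a point to a set. -/
def dlS (x : R2) (S : Set R2) : ℝ := Real.log (1 + d1S x S)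

/-- The Euclidean norm on the plane. -/
def eunorm (x : R2) : ℝ := Real.sqrt (x.1 ^ 2 + x.2 ^ 2)

/-- The Euclidean distance on the plane. -/
def eudist (x y : R2) : ℝ := eunorm (x - y)

/-- The embedding of ℤ² into ℝ². -/
def emb (x : Z2) : R2 := ((x.1 : ℝ), (x.2 : ℝ))

/-- Ψ_{U,V}(x) = 1 + d₁(x,∂U) + d₁(x,∂V). -/
def Psi (U V : Set R2) (x : R2) : ℝ := 1 + d1S x (frontier U) + d1S x (frontier V)

/-- U and V are transverse: for some c ∈ (0,1), Ψ_{U,V}(x) ≥ |x|ᶜ whenever |x| ≥ 1/c. -/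
def Transverse (U V : Set R2) : Prop :=
  ∃ c : ℝ, 0 < c ∧ c < 1 ∧ ∀ x : R2, 1 / c ≤ eunorm x → eunorm x ^ c ≤ Psi U V x

/-- The operator norm of an m×m complex matrix. -/
def matNorm {m : ℕ} (M : Matrix (Fin m) (Fin m) ℂ) : ℝ :=
  ‖Matrix.toEuclideanCLM (𝕜 := ℂ) M‖

/-- The real-valued indicator function of a subset of the plane. -/
def indR (W : Set R2) (z : R2) : ℝ := Set.indicator W (fun _ => (1:ℝ)) z

/-- Product of two kernels: (A·B)(x,y) = Σ_z A(x,z)B(z,y). -/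
def kprod {m : ℕ} (A B : Z2 → Z2 → Matrix (Fin m) (Fin m) ℂ) :
    Z2 → Z2 → Matrix (Fin m) (Fin m) ℂ :=
  fun x y => ∑' z : Z2, A x z * B z y

/-- Left-associated iterated kernel products: PP S k = ((S 0 · S 1) · ⋯) · S k. -/
def PP {m : ℕ} (S : ℕ → Z2 → Z2 → Matrix (Fin m) (Fin m) ℂ) :
    ℕ → Z2 → Z2 → Matrix (Fin m) (Fin m) ℂ
  | 0 => S 0
  | k + 1 => kprod (PP S k) (S (k + 1))

/-- A kernel is PSR: polynomially short range. -/
def IsPSRker {m : ℕ} (S : Z2 → Z2 → Matrix (Fin m) (Fin m) ℂ) : Prop :=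
  ∀ N : ℝ, 0 < N → ∃ C : ℝ, 0 < C ∧ ∀ x y : Z2,
    matNorm (S x y) ≤ C * (1 + d1 (emb x) (emb y)) ^ (-N)

-- ### Auxiliary lemmas ###

lemma aux_d1_nonneg (x y : R2) : 0 ≤ d1 x y := by unfold d1; positivity

lemma aux_d1_comm (x y : R2) : d1 x y = d1 y x := by
  unfold d1; rw [abs_sub_comm, abs_sub_comm x.2]

lemma aux_d1_triangle (x y z : R2) : d1 x z ≤ d1 x y + d1 y z := by
  unfold d1
  have h1 := abs_sub_le x.1 y.1 z.1
  have h2 := abs_sub_le x.2 y.2 z.2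
  linarith

lemma aux_d1S_nonneg (x : R2) (A : Set R2) : 0 ≤ d1S x A := by
  unfold d1S
  rcases A.eq_empty_or_nonempty with rfl | hA
  · simp [Real.sInf_empty]
  · exact le_csInf (hA.image _) (by rintro b ⟨a, _, rfl⟩; exact aux_d1_nonneg _ _)

lemma aux_d1S_le (x y : R2) (A : Set R2) : d1S x A ≤ d1 x y + d1S y A := by
  rcases A.eq_empty_or_nonempty with rfl | hA
  · unfold d1S; simp [Real.sInf_empty]; exact aux_d1_nonneg _ _
  · have : d1S x A - d1 x y ≤ d1S y A := by
      apply le_csInf (hA.image _)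
      rintro b ⟨a, ha, rfl⟩
      have h1 : d1S x A ≤ d1 x a :=
        csInf_le ⟨0, by rintro b ⟨a', _, rfl⟩; exact aux_d1_nonneg _ _⟩ ⟨a, ha, rfl⟩
      have h2 := aux_d1_triangle x y a
      linarith
    linarith

open Real in
lemma aux_summable_int_rpow {s : ℝ} (hs : 1 < s) :
    Summable (fun k : ℤ => (1 + |(k : ℝ)|) ^ (-s)) := by
  have hnat : Summable (fun n : ℕ => (1 + (n : ℝ)) ^ (-s)) := by
    have h0 : Summable (fun n : ℕ => (n : ℝ) ^ (-s)) :=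
      Real.summable_nat_rpow.2 (by linarith)
    have := h0.comp_injective (add_left_injective 1)
    apply this.congr (fun n => ?_)
    simp [Function.comp, add_comm]
  apply Summable.of_nat_of_neg
  · simpa using hnat
  · simpa using hnat

open Real in
lemma aux_summable_base {N : ℝ} (hN : 2 < N) :
    Summable (fun z : Z2 => (1 + (|(z.1 : ℝ)| + |(z.2 : ℝ)|)) ^ (-N)) := by
  have h1 : Summable (fun k : ℤ => (1 + |(k : ℝ)|) ^ (-(N/2))) :=
    aux_summable_int_rpow (by linarith)
  have hprod : Summable (fun z : Z2 =>
      (1 + |(z.1 : ℝ)|) ^ (-(N/2)) * (1 + |(z.2 : ℝ)|) ^ (-(N/2))) :=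
    h1.mul_of_nonneg h1 (fun k => rpow_nonneg (by positivity) _)
      (fun k => rpow_nonneg (by positivity) _)
  apply hprod.of_nonneg_of_le (fun z => rpow_nonneg (by positivity) _)
  intro z
  set a := |(z.1 : ℝ)|; set b := |(z.2 : ℝ)|
  have ha : 0 ≤ a := abs_nonneg _
  have hb : 0 ≤ b := abs_nonneg _
  have key : (1 + a) * (1 + b) ≤ (1 + (a + b)) ^ (2 : ℕ) := by nlinarith
  calc (1 + (a + b)) ^ (-N) = (((1 + (a+b)) ^ (2:ℕ)) : ℝ) ^ (-(N/2)) := by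
        rw [← rpow_natCast (1 + (a+b)) 2, ← rpow_mul (by positivity)]
        norm_num
        ring_nf
    _ ≤ ((1 + a) * (1 + b)) ^ (-(N/2)) := by
        apply rpow_le_rpow_of_nonpos (by positivity) key (by linarith)
    _ = (1 + a) ^ (-(N/2)) * (1 + b) ^ (-(N/2)) := mul_rpow (by positivity) (by positivity)

open Real in
lemma aux_d1_emb_sub (x y : Z2) :
    d1 (emb x) (emb y) = |((x - y).1 : ℝ)| + |((x - y).2 : ℝ)| := by
  unfold d1 emb
  rw [Prod.fst_sub, Prod.snd_sub]
  push_cast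
  rfl

open Real in
lemma aux_summable_trans {N : ℝ} (hN : 2 < N) (x : Z2) :
    Summable (fun y : Z2 => (1 + d1 (emb x) (emb y)) ^ (-N)) ∧
    ∑' y : Z2, (1 + d1 (emb x) (emb y)) ^ (-N)
      = ∑' z : Z2, (1 + (|(z.1 : ℝ)| + |(z.2 : ℝ)|)) ^ (-N) := by
  set g : Z2 → ℝ := fun z => (1 + (|(z.1 : ℝ)| + |(z.2 : ℝ)|)) ^ (-N) with hg
  have he : (fun y : Z2 => (1 + d1 (emb x) (emb y)) ^ (-N)) = g ∘ (Equiv.subLeft x) := by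
    funext y
    simp only [hg, Function.comp, Equiv.subLeft_apply]
    rw [aux_d1_emb_sub]
  constructor
  · rw [he]; exact (Equiv.summable_iff _).2 (aux_summable_base hN)
  · calc ∑' y : Z2, (1 + d1 (emb x) (emb y)) ^ (-N)
        = ∑' y : Z2, g ((Equiv.subLeft x) y) := by rw [he]; rfl
      _ = ∑' z, g z := Equiv.tsum_eq _ g

lemma aux_matNorm_nonneg {m : ℕ} (M : Matrix (Fin m) (Fin m) ℂ) : 0 ≤ matNorm M :=
  norm_nonneg _

lemma aux_matNorm_mul_le {m : ℕ} (A B : Matrix (Fin m) (Fin m) ℂ) :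
    matNorm (A * B) ≤ matNorm A * matNorm B := by
  unfold matNorm; rw [map_mul]; exact norm_mul_le _ _

def matCLM (m : ℕ) :
    Matrix (Fin m) (Fin m) ℂ →L[ℂ] (EuclideanSpace ℂ (Fin m) →L[ℂ] EuclideanSpace ℂ (Fin m)) :=
  LinearMap.toContinuousLinearMap
    { toFun := fun M => Matrix.toEuclideanCLM (𝕜 := ℂ) M
      map_add' := fun a b => map_add _ a b
      map_smul' := fun c M => map_smul _ c M }

def matCLMinv (m : ℕ) :
    (EuclideanSpace ℂ (Fin m) →L[ℂ] EuclideanSpace ℂ (Fin m)) →L[ℂ] Matrix (Fin m) (Fin m) ℂ :=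
  LinearMap.toContinuousLinearMap
    { toFun := fun T => (Matrix.toEuclideanCLM (𝕜 := ℂ)).symm T
      map_add' := fun a b => map_add _ a b
      map_smul' := fun c M => map_smul _ c M }

lemma aux_matNorm_tsum_le {m : ℕ} (f : Z2 → Matrix (Fin m) (Fin m) ℂ)
    (h : Summable fun z => matNorm (f z)) :
    matNorm (∑' z, f z) ≤ ∑' z, matNorm (f z) := by
  have h1 : Summable fun z => matCLM m (f z) := Summable.of_norm h
  have h2 : Summable f := by
    have h3 := h1.map (matCLMinv m) (matCLMinv m).continuous
    have he : (fun z => matCLMinv m (matCLM m (f z))) = f := by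
      funext z
      show (Matrix.toEuclideanCLM (𝕜 := ℂ)).symm (Matrix.toEuclideanCLM (𝕜 := ℂ) (f z)) = f z
      simp
    rw [← he]
    exact h3
  have h4 : matCLM m (∑' z, f z) = ∑' z, matCLM m (f z) := (matCLM m).map_tsum h2
  show ‖matCLM m (∑' z, f z)‖ ≤ _
  rw [h4]
  exact norm_tsum_le_tsum_norm h

lemma aux_geom_mean {r C₁ C₂ f g : ℝ} (hr : 0 ≤ r) (hC₁ : 0 ≤ C₁) (hC₂ : 0 ≤ C₂)
    (hf : 0 ≤ f) (hg : 0 ≤ g) (h₁ : r ≤ C₁ * f) (h₂ : r ≤ C₂ * g) :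
    r ≤ Real.sqrt (C₁ * C₂) * (Real.sqrt f * Real.sqrt g) := by
  have h : r * r ≤ (C₁ * f) * (C₂ * g) := mul_le_mul h₁ h₂ hr (by positivity)
  calc r = Real.sqrt (r * r) := (Real.sqrt_mul_self hr).symm
    _ ≤ Real.sqrt ((C₁ * f) * (C₂ * g)) := Real.sqrt_le_sqrt h
    _ = Real.sqrt (C₁ * C₂) * (Real.sqrt f * Real.sqrt g) := by
        rw [mul_mul_mul_comm, Real.sqrt_mul (by positivity), Real.sqrt_mul hf]

lemma aux_sqrt_rpow {x s : ℝ} (hx : 0 ≤ x) : Real.sqrt (x ^ (-(2 * s))) = x ^ (-s) := by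
  rw [Real.sqrt_eq_rpow, ← Real.rpow_mul hx]
  ring_nf

/-- Weighted polynomial bound for a kernel. -/
def WtB {m : ℕ} (K : Z2 → Z2 → Matrix (Fin m) (Fin m) ℂ) (w : Z2 → ℝ) : Prop :=
  ∀ N : ℝ, 0 < N → ∃ C : ℝ, 0 < C ∧ ∀ x y : Z2,
    matNorm (K x y) ≤ C * ((1 + d1 (emb x) (emb y)) ^ (-N) * (w x) ^ (-N))

/-- Pure weight bound for a kernel. -/
def DecB {m : ℕ} (K : Z2 → Z2 → Matrix (Fin m) (Fin m) ℂ) (w : Z2 → ℝ) : Prop :=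
  ∀ N : ℝ, 0 < N → ∃ C : ℝ, 0 < C ∧ ∀ x y : Z2, matNorm (K x y) ≤ C * (w x) ^ (-N)

open Real in
lemma aux_DecB_one {m : ℕ} {K : Z2 → Z2 → Matrix (Fin m) (Fin m) ℂ}
    (h : IsPSRker K) : DecB K (fun _ => 1) := by
  intro N hN
  obtain ⟨C, hC, H⟩ := h 1 one_pos
  refine ⟨C, hC, fun x y => ?_⟩
  have h1 : (1 + d1 (emb x) (emb y)) ^ (-(1:ℝ)) ≤ 1 :=
    rpow_le_one_of_one_le_of_nonpos (by nlinarith [aux_d1_nonneg (emb x) (emb y)]) (by norm_num)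
  calc matNorm (K x y) ≤ C * (1 + d1 (emb x) (emb y)) ^ (-(1:ℝ)) := H x y
    _ ≤ C * 1 := by nlinarith
    _ = C * ((1:ℝ)) ^ (-N) := by rw [one_rpow]

open Real in
lemma aux_DecB_mul {m : ℕ} {K : Z2 → Z2 → Matrix (Fin m) (Fin m) ℂ} {w v : Z2 → ℝ}
    (hw : ∀ x, 0 ≤ w x) (hv : ∀ x, 0 ≤ v x)
    (h2 : DecB K w) (h3 : DecB K v) : DecB K (fun x => w x * v x) := by
  intro N hN
  obtain ⟨C₁, hC₁, H₁⟩ := h2 (2*N) (by linarith)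
  obtain ⟨C₂, hC₂, H₂⟩ := h3 (2*N) (by linarith)
  refine ⟨Real.sqrt (C₁ * C₂), Real.sqrt_pos.2 (mul_pos hC₁ hC₂), fun x y => ?_⟩
  have := aux_geom_mean (aux_matNorm_nonneg (K x y)) hC₁.le hC₂.le
    (rpow_nonneg (hw x) _) (rpow_nonneg (hv x) _) (H₁ x y) (H₂ x y)
  calc matNorm (K x y)
      ≤ Real.sqrt (C₁ * C₂) * (Real.sqrt ((w x) ^ (-(2*N))) * Real.sqrt ((v x) ^ (-(2*N)))) := this
    _ = Real.sqrt (C₁ * C₂) * ((w x) ^ (-N) * (v x) ^ (-N)) := by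
        rw [aux_sqrt_rpow (hw x), aux_sqrt_rpow (hv x)]
    _ = Real.sqrt (C₁ * C₂) * (w x * v x) ^ (-N) := by rw [mul_rpow (hw x) (hv x)]

open Real in
lemma aux_WtB_of {m : ℕ} {K : Z2 → Z2 → Matrix (Fin m) (Fin m) ℂ} {w : Z2 → ℝ}
    (hw : ∀ x, 0 ≤ w x) (h1 : IsPSRker K) (h2 : DecB K w) : WtB K w := by
  intro N hN
  obtain ⟨C₁, hC₁, H₁⟩ := h1 (2*N) (by linarith)
  obtain ⟨C₂, hC₂, H₂⟩ := h2 (2*N) (by linarith)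
  refine ⟨Real.sqrt (C₁ * C₂), Real.sqrt_pos.2 (mul_pos hC₁ hC₂), fun x y => ?_⟩
  have hd : (0:ℝ) ≤ 1 + d1 (emb x) (emb y) := by nlinarith [aux_d1_nonneg (emb x) (emb y)]
  have := aux_geom_mean (aux_matNorm_nonneg (K x y)) hC₁.le hC₂.le
    (rpow_nonneg hd _) (rpow_nonneg (hw x) _) (H₁ x y) (H₂ x y)
  calc matNorm (K x y)
      ≤ Real.sqrt (C₁ * C₂) *
        (Real.sqrt ((1 + d1 (emb x) (emb y)) ^ (-(2*N))) * Real.sqrt ((w x) ^ (-(2*N)))) := this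
    _ = Real.sqrt (C₁ * C₂) * ((1 + d1 (emb x) (emb y)) ^ (-N) * (w x) ^ (-N)) := by
        rw [aux_sqrt_rpow hd, aux_sqrt_rpow (hw x)]

open Real in
/-- The key convolution lemma. -/
lemma aux_conv {m : ℕ} {A B : Z2 → Z2 → Matrix (Fin m) (Fin m) ℂ} {w v : Z2 → ℝ}
    (hw1 : ∀ x, 1 ≤ w x) (hv1 : ∀ x, 1 ≤ v x)
    (hvL : ∀ x z : Z2, v x ≤ (1 + d1 (emb x) (emb z)) ^ (2:ℝ) * v z)
    (hA : WtB A w) (hB : WtB B v) :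
    (∀ x y : Z2, Summable fun z : Z2 => matNorm (A x z * B z y)) ∧
    WtB (kprod A B) (fun x => w x * v x) := by
  -- the pointwise bound
  have claim : ∀ N : ℝ, 0 < N → ∃ C : ℝ, 0 < C ∧ ∀ x y z : Z2,
      matNorm (A x z * B z y) ≤
        (C * ((1 + d1 (emb x) (emb y)) ^ (-N) * ((w x) ^ (-N) * (v x) ^ (-N)))) *
          (1 + d1 (emb x) (emb z)) ^ (-(3:ℝ)) := by
    intro N hN
    set M : ℝ := 3*N + 3 with hM
    obtain ⟨C₁, hC₁, H₁⟩ := hA M (by linarith)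
    obtain ⟨C₂, hC₂, H₂⟩ := hB M (by linarith)
    refine ⟨C₁ * C₂, mul_pos hC₁ hC₂, fun x y z => ?_⟩
    set t : ℝ := 1 + d1 (emb x) (emb z) with ht
    set s : ℝ := 1 + d1 (emb z) (emb y) with hs
    set u : ℝ := 1 + d1 (emb x) (emb y) with hu
    have h1t : 1 ≤ t := by simp [ht]; exact aux_d1_nonneg _ _
    have h1s : 1 ≤ s := by simp [hs]; exact aux_d1_nonneg _ _
    have h1u : 1 ≤ u := by simp [hu]; exact aux_d1_nonneg _ _
    have hts : u ≤ t * s := by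
      have := aux_d1_triangle (emb x) (emb z) (emb y)
      have h1 := aux_d1_nonneg (emb x) (emb z)
      have h2 := aux_d1_nonneg (emb z) (emb y)
      nlinarith
    have h0t : (0:ℝ) < t := by linarith
    have h0s : (0:ℝ) < s := by linarith
    have h0u : (0:ℝ) < u := by linarith
    -- factor bounds
    have hwx : (w x) ^ (-M) ≤ (w x) ^ (-N) :=
      rpow_le_rpow_of_exponent_le (hw1 x) (by linarith)
    have hvz : (v z) ^ (-M) ≤ (v x) ^ (-N) * t ^ (2*N) := by
      have e1 : (v z) ^ (-M) ≤ (v z) ^ (-N) :=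
        rpow_le_rpow_of_exponent_le (hv1 z) (by linarith)
      have e2 : v x * t ^ (-(2:ℝ)) ≤ v z := by
        have h' := hvL x z
        rw [← ht] at h'
        have ht2 : (0:ℝ) < t ^ (2:ℝ) := rpow_pos_of_pos h0t _
        rw [rpow_neg h0t.le, ← div_eq_mul_inv, div_le_iff₀ ht2, mul_comm]
        exact h'
      have e3 : (0:ℝ) < v x * t ^ (-(2:ℝ)) := by
        have := hv1 x
        have := rpow_pos_of_pos h0t (-(2:ℝ))
        nlinarith
      have e4 : (v z) ^ (-N) ≤ (v x * t ^ (-(2:ℝ))) ^ (-N) :=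
        rpow_le_rpow_of_nonpos e3 e2 (by linarith)
      have e5 : (v x * t ^ (-(2:ℝ))) ^ (-N) = (v x) ^ (-N) * t ^ (2*N) := by
        rw [mul_rpow (by linarith [hv1 x]) (rpow_nonneg h0t.le _), ← rpow_mul h0t.le]
        ring_nf
      linarith [e1, e4.trans_eq e5]
    have hkey : t ^ (-M) * t ^ (2*N) * s ^ (-M) ≤ u ^ (-N) * t ^ (-(3:ℝ)) := by
      have f1 : t ^ (-M) * t ^ (2*N) = t ^ (-(N+3)) := by
        rw [← rpow_add h0t]; congr 1; rw [hM]; ring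
      have f2 : s ^ (-M) ≤ s ^ (-(N+3)) :=
        rpow_le_rpow_of_exponent_le h1s (by rw [hM]; linarith)
      have f3 : t ^ (-(N+3)) * s ^ (-(N+3)) ≤ u ^ (-N) * t ^ (-(3:ℝ)) := by
        have g1 : t ^ (-(N+3)) = t ^ (-N) * t ^ (-(3:ℝ)) := by
          rw [← rpow_add h0t]; ring_nf
        have g2 : s ^ (-(N+3)) = s ^ (-N) * s ^ (-(3:ℝ)) := by
          rw [← rpow_add h0s]; ring_nf
        have g3 : t ^ (-N) * s ^ (-N) ≤ u ^ (-N) := by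
          rw [← mul_rpow h0t.le h0s.le]
          exact rpow_le_rpow_of_nonpos h0u hts (by linarith)
        have g4 : s ^ (-(3:ℝ)) ≤ 1 :=
          rpow_le_one_of_one_le_of_nonpos h1s (by norm_num)
        have g5 : (0:ℝ) ≤ t ^ (-(3:ℝ)) := rpow_nonneg h0t.le _
        have g6 : (0:ℝ) ≤ t ^ (-N) * s ^ (-N) := by positivity
        calc t ^ (-(N+3)) * s ^ (-(N+3))
            = (t ^ (-N) * s ^ (-N)) * (t ^ (-(3:ℝ)) * s ^ (-(3:ℝ))) := by
              rw [g1, g2]; ring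
          _ ≤ u ^ (-N) * (t ^ (-(3:ℝ)) * 1) := by
              apply mul_le_mul g3 ?_ (by positivity) (rpow_nonneg h0u.le _)
              exact mul_le_mul_of_nonneg_left g4 g5
          _ = u ^ (-N) * t ^ (-(3:ℝ)) := by ring
      calc t ^ (-M) * t ^ (2*N) * s ^ (-M) = t ^ (-(N+3)) * s ^ (-M) := by rw [f1]
        _ ≤ t ^ (-(N+3)) * s ^ (-(N+3)) :=
            mul_le_mul_of_nonneg_left f2 (rpow_nonneg h0t.le _)
        _ ≤ u ^ (-N) * t ^ (-(3:ℝ)) := f3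
    -- assemble
    have step1 : matNorm (A x z * B z y) ≤
        (C₁ * (t ^ (-M) * (w x) ^ (-M))) * (C₂ * (s ^ (-M) * (v z) ^ (-M))) := by
      calc matNorm (A x z * B z y) ≤ matNorm (A x z) * matNorm (B z y) :=
            aux_matNorm_mul_le _ _
        _ ≤ _ := by
            apply mul_le_mul (H₁ x z) (H₂ z y) (aux_matNorm_nonneg _)
            have : (0:ℝ) ≤ t ^ (-M) * (w x) ^ (-M) := by
              apply mul_nonneg (rpow_nonneg h0t.le _) (rpow_nonneg (by linarith [hw1 x]) _)
            nlinarith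
    have hwN : (0:ℝ) ≤ (w x) ^ (-N) := rpow_nonneg (by linarith [hw1 x]) _
    have hvN : (0:ℝ) ≤ (v x) ^ (-N) := rpow_nonneg (by linarith [hv1 x]) _
    calc matNorm (A x z * B z y)
        ≤ (C₁ * (t ^ (-M) * (w x) ^ (-M))) * (C₂ * (s ^ (-M) * (v z) ^ (-M))) := step1
      _ = (C₁ * C₂) * ((w x) ^ (-M) * (v z) ^ (-M) * (t ^ (-M) * s ^ (-M))) := by ring
      _ ≤ (C₁ * C₂) * ((w x) ^ (-N) * ((v x) ^ (-N) * t ^ (2*N)) * (t ^ (-M) * s ^ (-M))) := by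
          apply mul_le_mul_of_nonneg_left ?_ (by positivity)
          apply mul_le_mul ?_ le_rfl (by positivity) ?_
          · exact mul_le_mul hwx hvz (rpow_nonneg (by linarith [hv1 z]) _) hwN
          · apply mul_nonneg hwN
            apply mul_nonneg hvN (rpow_nonneg h0t.le _)
      _ = (C₁ * C₂) * ((w x) ^ (-N) * (v x) ^ (-N)) * (t ^ (-M) * t ^ (2*N) * s ^ (-M)) := by
          ring
      _ ≤ (C₁ * C₂) * ((w x) ^ (-N) * (v x) ^ (-N)) * (u ^ (-N) * t ^ (-(3:ℝ))) := by
          apply mul_le_mul_of_nonneg_left hkey (by positivity)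
      _ = ((C₁ * C₂) * (u ^ (-N) * ((w x) ^ (-N) * (v x) ^ (-N)))) * t ^ (-(3:ℝ)) := by ring
  -- summability of the dominating series in z
  have hdom : ∀ x : Z2, Summable fun z : Z2 => (1 + d1 (emb x) (emb z)) ^ (-(3:ℝ)) :=
    fun x => (aux_summable_trans (by norm_num) x).1
  have hsum : ∀ x y : Z2, Summable fun z : Z2 => matNorm (A x z * B z y) := by
    intro x y
    obtain ⟨C, hC, H⟩ := claim 1 one_pos
    set D : ℝ := C * ((1 + d1 (emb x) (emb y)) ^ (-(1:ℝ)) * ((w x) ^ (-(1:ℝ)) * (v x) ^ (-(1:ℝ))))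
    exact ((hdom x).mul_left D).of_nonneg_of_le (fun z => aux_matNorm_nonneg _) (fun z => H x y z)
  refine ⟨hsum, ?_⟩
  intro N hN
  obtain ⟨C, hC, H⟩ := claim N hN
  set A3 : ℝ := ∑' z : Z2, (1 + (|(z.1 : ℝ)| + |(z.2 : ℝ)|)) ^ (-(3:ℝ)) with hA3
  have hA3nn : 0 ≤ A3 := tsum_nonneg (fun z => rpow_nonneg (by positivity) _)
  refine ⟨C * (A3 + 1), by nlinarith, fun x y => ?_⟩
  have hwx0 : (0:ℝ) ≤ w x := by linarith [hw1 x]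
  have hvx0 : (0:ℝ) ≤ v x := by linarith [hv1 x]
  have hbd : matNorm (kprod A B x y) ≤ ∑' z : Z2, matNorm (A x z * B z y) :=
    aux_matNorm_tsum_le _ (hsum x y)
  set D : ℝ := C * ((1 + d1 (emb x) (emb y)) ^ (-N) * ((w x) ^ (-N) * (v x) ^ (-N))) with hD
  have hDnn : 0 ≤ D := by
    apply mul_nonneg hC.le
    apply mul_nonneg (rpow_nonneg (by nlinarith [aux_d1_nonneg (emb x) (emb y)]) _)
    exact mul_nonneg (rpow_nonneg hwx0 _) (rpow_nonneg hvx0 _)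
  have hbd2 : ∑' z : Z2, matNorm (A x z * B z y)
      ≤ ∑' z : Z2, D * (1 + d1 (emb x) (emb z)) ^ (-(3:ℝ)) := by
    apply Summable.tsum_le_tsum (fun z => H x y z) (hsum x y) ((hdom x).mul_left D)
  have hval : ∑' z : Z2, D * (1 + d1 (emb x) (emb z)) ^ (-(3:ℝ)) = D * A3 := by
    rw [tsum_mul_left, (aux_summable_trans (by norm_num) x).2]
  have final : matNorm (kprod A B x y) ≤ D * A3 := by
    rw [← hval]; exact hbd.trans hbd2
  calc matNorm (kprod A B x y) ≤ D * A3 := final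
    _ ≤ D * (A3 + 1) := by nlinarith
    _ = (C * (A3 + 1)) * ((1 + d1 (emb x) (emb y)) ^ (-N) * ((w x) ^ (-N) * (v x) ^ (-N))) := by
        rw [hD]; ring
    _ = (C * (A3 + 1)) * ((1 + d1 (emb x) (emb y)) ^ (-N) * (w x * v x) ^ (-N)) := by
        rw [mul_rpow hwx0 hvx0]

/-- The weight 1 + d₁(x, A). -/
def awt (A : Set R2) (x : Z2) : ℝ := 1 + d1S (emb x) A

/-- Single-step weight. -/
def svt (A B : Set R2) (p q j : ℕ) (x : Z2) : ℝ :=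
  (if p = j then awt A x else 1) * (if q = j then awt B x else 1)

/-- Accumulated weight. -/
def wgt (A B : Set R2) (p q k : ℕ) (x : Z2) : ℝ :=
  (if p ≤ k then awt A x else 1) * (if q ≤ k then awt B x else 1)

lemma aux_awt_one_le (A : Set R2) (x : Z2) : 1 ≤ awt A x := by
  unfold awt; linarith [aux_d1S_nonneg (emb x) A]

lemma aux_awt_lip (A : Set R2) (x z : Z2) :
    awt A x ≤ (1 + d1 (emb x) (emb z)) * awt A z := by
  unfold awt
  nlinarith [aux_d1S_le (emb x) (emb z) A, aux_d1_nonneg (emb x) (emb z),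
    aux_d1S_nonneg (emb z) A]

lemma aux_svt_one_le (A B : Set R2) (p q j : ℕ) (x : Z2) : 1 ≤ svt A B p q j x := by
  unfold svt
  split_ifs <;> nlinarith [aux_awt_one_le A x, aux_awt_one_le B x]

lemma aux_wgt_one_le (A B : Set R2) (p q k : ℕ) (x : Z2) : 1 ≤ wgt A B p q k x := by
  unfold wgt
  split_ifs <;> nlinarith [aux_awt_one_le A x, aux_awt_one_le B x]

open Real in
lemma aux_svt_lip (A B : Set R2) (p q j : ℕ) (x z : Z2) :
    svt A B p q j x ≤ (1 + d1 (emb x) (emb z)) ^ (2:ℝ) * svt A B p q j z := by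
  have hd : (0:ℝ) ≤ d1 (emb x) (emb z) := aux_d1_nonneg _ _
  have h2 : (1 + d1 (emb x) (emb z)) ^ (2:ℝ)
      = (1 + d1 (emb x) (emb z)) * (1 + d1 (emb x) (emb z)) := by
    rw [show (2:ℝ) = ((2:ℕ):ℝ) by norm_num, Real.rpow_natCast]
    ring
  rw [h2]
  unfold svt
  split_ifs <;>
    nlinarith [aux_awt_lip A x z, aux_awt_lip B x z, aux_awt_one_le A x, aux_awt_one_le B x,
      aux_awt_one_le A z, aux_awt_one_le B z, hd,
      mul_le_mul (aux_awt_lip A x z) (aux_awt_lip B x z)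
        (by nlinarith [aux_awt_one_le B x])
        (by nlinarith [aux_awt_one_le A z, hd])]

lemma aux_ite_split (a : ℝ) (p k : ℕ) :
    (if p ≤ k + 1 then a else 1) = (if p ≤ k then a else 1) * (if p = k + 1 then a else 1) := by
  by_cases h1 : p ≤ k
  · simp [h1, show p ≤ k + 1 by omega, show ¬p = k + 1 by omega]
  · by_cases h3 : p = k + 1
    · simp [h1, h3]
    · simp [h1, h3, show ¬p ≤ k + 1 by omega]

lemma aux_wgt_succ (A B : Set R2) (p q k : ℕ) (x : Z2) :
    wgt A B p q (k + 1) x = wgt A B p q k x * svt A B p q (k + 1) x := by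
  unfold wgt svt
  rw [aux_ite_split (awt A x) p k, aux_ite_split (awt B x) q k]
  ring

lemma aux_wgt_zero (A B : Set R2) (p q : ℕ) (x : Z2) :
    wgt A B p q 0 x = svt A B p q 0 x := by
  unfold wgt svt
  simp [Nat.le_zero]

lemma aux_wgt_final (A B : Set R2) {p q k : ℕ} (hp : p ≤ k) (hq : q ≤ k) (x : Z2) :
    wgt A B p q k x = awt A x * awt B x := by
  unfold wgt; simp [hp, hq]

lemma aux_DecB_congr {m : ℕ} {K : Z2 → Z2 → Matrix (Fin m) (Fin m) ℂ} {w v : Z2 → ℝ}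
    (h : DecB K w) (he : ∀ x, w x = v x) : DecB K v := by
  have hwv : w = v := funext he
  rw [← hwv]; exact h

lemma aux_WtB_congr {m : ℕ} {K : Z2 → Z2 → Matrix (Fin m) (Fin m) ℂ} {w v : Z2 → ℝ}
    (h : WtB K w) (he : ∀ x, w x = v x) : WtB K v := by
  have hwv : w = v := funext he
  rw [← hwv]; exact h

open Real in
lemma aux_DecB_of_exp {m : ℕ} {K : Z2 → Z2 → Matrix (Fin m) (Fin m) ℂ} {A : Set R2}
    (h : ∀ N : ℝ, 0 < N → ∃ C : ℝ, 0 < C ∧ ∀ x y : Z2,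
      matNorm (K x y) ≤ C * Real.exp (-N * dlS (emb x) A - N * dlS (emb y) A)) :
    DecB K (awt A) := by
  intro N hN
  obtain ⟨C, hC, H⟩ := h N hN
  refine ⟨C, hC, fun x y => ?_⟩
  have hx0 : 0 ≤ d1S (emb x) A := aux_d1S_nonneg _ _
  have hy0 : 0 ≤ d1S (emb y) A := aux_d1S_nonneg _ _
  have e1 : Real.exp (-N * dlS (emb x) A - N * dlS (emb y) A)
      = Real.exp (-N * dlS (emb x) A) * Real.exp (-N * dlS (emb y) A) := by
    rw [← Real.exp_add]; ring_nf
  have e2 : Real.exp (-N * dlS (emb x) A) = (awt A x) ^ (-N) := by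
    rw [awt, Real.rpow_def_of_pos (by linarith : (0:ℝ) < 1 + d1S (emb x) A)]
    unfold dlS
    ring_nf
  have e3 : Real.exp (-N * dlS (emb y) A) ≤ 1 := by
    apply Real.exp_le_one_iff.2
    have hlog : 0 ≤ dlS (emb y) A := by
      unfold dlS
      exact Real.log_nonneg (by linarith)
    nlinarith
  calc matNorm (K x y) ≤ C * Real.exp (-N * dlS (emb x) A - N * dlS (emb y) A) := H x y
    _ = C * ((awt A x) ^ (-N) * Real.exp (-N * dlS (emb y) A)) := by rw [e1, e2]
    _ ≤ C * ((awt A x) ^ (-N) * 1) := by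
        apply mul_le_mul_of_nonneg_left ?_ hC.le
        exact mul_le_mul_of_nonneg_left e3 (rpow_nonneg (by linarith [aux_awt_one_le A x]) _)
    _ = C * (awt A x) ^ (-N) := by ring

open Real in
lemma aux_psi_bound {U V : Set R2} {c : ℝ} (hc0 : 0 < c) (hc1 : c < 1)
    (htr : ∀ x : R2, 1 / c ≤ eunorm x → eunorm x ^ c ≤ Psi U V x) {N : ℝ} (hN : 0 < N)
    (x : Z2) :
    (awt (frontier U) x * awt (frontier V) x) ^ (-N)
      ≤ (4 + 2 / c) ^ (c * N) * (1 + (|(x.1 : ℝ)| + |(x.2 : ℝ)|)) ^ (-(c * N)) := by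
  set sU := d1S (emb x) (frontier U) with hsUdef
  set sV := d1S (emb x) (frontier V) with hsVdef
  set L : ℝ := |(x.1 : ℝ)| + |(x.2 : ℝ)| with hLdef
  set e : ℝ := eunorm (emb x) with hedef
  have hsU : 0 ≤ sU := aux_d1S_nonneg _ _
  have hsV : 0 ≤ sV := aux_d1S_nonneg _ _
  have hL0 : (0:ℝ) ≤ L := by positivity
  have he0 : 0 ≤ e := Real.sqrt_nonneg _
  have he2 : e ^ (2:ℕ) = ((x.1:ℝ)) ^ (2:ℕ) + ((x.2:ℝ)) ^ (2:ℕ) := by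
    rw [hedef]; unfold eunorm emb
    exact Real.sq_sqrt (by positivity)
  have hsq1 : |(x.1:ℝ)| ^ (2:ℕ) = ((x.1:ℝ)) ^ (2:ℕ) := sq_abs _
  have hsq2 : |(x.2:ℝ)| ^ (2:ℕ) = ((x.2:ℝ)) ^ (2:ℕ) := sq_abs _
  have habs1 : (0:ℝ) ≤ |(x.1:ℝ)| := abs_nonneg _
  have habs2 : (0:ℝ) ≤ |(x.2:ℝ)| := abs_nonneg _
  have heL : e ≤ L := by nlinarith
  have hLe : L ≤ 2 * e := by nlinarith [sq_nonneg (|(x.1:ℝ)| - |(x.2:ℝ)|)]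
  have hprod : 1 + sU + sV ≤ awt (frontier U) x * awt (frontier V) x := by
    unfold awt; rw [← hsUdef, ← hsVdef]; nlinarith
  have hab1 : (1:ℝ) ≤ awt (frontier U) x * awt (frontier V) x := by
    nlinarith [aux_awt_one_le (frontier U) x, aux_awt_one_le (frontier V) x]
  have hD4 : (4:ℝ) ≤ 4 + 2 / c := by
    have : 0 < 2 / c := by positivity
    linarith
  have hDnn : (0:ℝ) ≤ 1 + L := by linarith
  by_cases hcase : 1 / c ≤ e
  · have hP := htr (emb x) (by rw [← hedef] at *; exact hcase)
    have hPsi1 : e ^ c ≤ awt (frontier U) x * awt (frontier V) x := by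
      calc e ^ c ≤ Psi U V (emb x) := hP
        _ = 1 + sU + sV := rfl
        _ ≤ _ := hprod
    have h1c : (1:ℝ) < 1 / c := by rw [lt_div_iff₀ hc0]; linarith
    have he1 : (1:ℝ) ≤ e := by linarith
    have hquarter : (1 + L) / 4 ≤ e := by linarith
    have h0q : (0:ℝ) < (1 + L) / 4 := by linarith
    have h0e : (0:ℝ) < e := by linarith
    calc (awt (frontier U) x * awt (frontier V) x) ^ (-N)
        ≤ (e ^ c) ^ (-N) :=
          rpow_le_rpow_of_nonpos (rpow_pos_of_pos h0e c) hPsi1 (by linarith)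
      _ = e ^ (-(c * N)) := by rw [← rpow_mul he0]; ring_nf
      _ ≤ ((1 + L) / 4) ^ (-(c * N)) := by
          apply rpow_le_rpow_of_nonpos h0q hquarter
          nlinarith
      _ = (1 + L) ^ (-(c * N)) / 4 ^ (-(c * N)) :=
          Real.div_rpow hDnn (by norm_num : (0:ℝ) ≤ 4) (-(c * N))
      _ = 4 ^ (c * N) * (1 + L) ^ (-(c * N)) := by
          rw [Real.rpow_neg (by norm_num : (0:ℝ) ≤ 4), div_eq_mul_inv, inv_inv, mul_comm]
      _ ≤ (4 + 2 / c) ^ (c * N) * (1 + L) ^ (-(c * N)) := by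
          apply mul_le_mul_of_nonneg_right
            (Real.rpow_le_rpow (by norm_num) hD4 (by positivity))
            (rpow_nonneg hDnn _)
  · push_neg at hcase
    have h1 : (awt (frontier U) x * awt (frontier V) x) ^ (-N) ≤ 1 :=
      rpow_le_one_of_one_le_of_nonpos hab1 (by linarith)
    have h2 : 1 + L ≤ 4 + 2 / c := by
      have : e < 1 / c := hcase
      have h2e : 2 * e < 2 / c := by
        rw [div_eq_mul_inv, mul_comm] at *
        nlinarith [hc0]
      linarith
    have h3 : (1 + L) ^ (c * N) ≤ (4 + 2 / c) ^ (c * N) :=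
      Real.rpow_le_rpow hDnn h2 (by positivity)
    have h4 : (1:ℝ) = (1 + L) ^ (c * N) * (1 + L) ^ (-(c * N)) := by
      rw [← Real.rpow_add (by linarith : (0:ℝ) < 1 + L)]
      norm_num
    calc (awt (frontier U) x * awt (frontier V) x) ^ (-N) ≤ 1 := h1
      _ = (1 + L) ^ (c * N) * (1 + L) ^ (-(c * N)) := h4
      _ ≤ (4 + 2 / c) ^ (c * N) * (1 + L) ^ (-(c * N)) :=
          mul_le_mul_of_nonneg_right h3 (rpow_nonneg hDnn _)

set_option maxHeartbeats 1000000 in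
open Real in
lemma aux_final_sum {c N : ℝ} (hN2 : 2 < N) (hcN2 : 2 < c * N) :
    Summable (fun xy : Z2 × Z2 =>
      (1 + (|(xy.1.1 : ℝ)| + |(xy.1.2 : ℝ)|)) ^ (-(c * N)) *
        (1 + d1 (emb xy.1) (emb xy.2)) ^ (-N)) := by
  have hnn : (0 : Z2 × Z2 → ℝ) ≤ (fun xy : Z2 × Z2 =>
      (1 + (|(xy.1.1 : ℝ)| + |(xy.1.2 : ℝ)|)) ^ (-(c * N)) *
        (1 + d1 (emb xy.1) (emb xy.2)) ^ (-N)) := by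
    intro xy
    apply mul_nonneg (Real.rpow_nonneg (by positivity) _)
      (Real.rpow_nonneg (by nlinarith [aux_d1_nonneg (emb xy.1) (emb xy.2)]) _)
  apply (summable_prod_of_nonneg hnn).2
  refine ⟨fun x => ?_, ?_⟩
  · show Summable fun y : Z2 =>
      (1 + (|(x.1 : ℝ)| + |(x.2 : ℝ)|)) ^ (-(c * N)) * (1 + d1 (emb x) (emb y)) ^ (-N)
    exact ((aux_summable_trans hN2 x).1).mul_left _
  · show Summable fun x : Z2 => ∑' y : Z2,
      (1 + (|(x.1 : ℝ)| + |(x.2 : ℝ)|)) ^ (-(c * N)) * (1 + d1 (emb x) (emb y)) ^ (-N)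
    have heq : (fun x : Z2 => ∑' y : Z2,
        (1 + (|(x.1 : ℝ)| + |(x.2 : ℝ)|)) ^ (-(c * N)) * (1 + d1 (emb x) (emb y)) ^ (-N))
        = fun x : Z2 => (1 + (|(x.1 : ℝ)| + |(x.2 : ℝ)|)) ^ (-(c * N)) *
            (∑' z : Z2, (1 + (|(z.1 : ℝ)| + |(z.2 : ℝ)|)) ^ (-N)) := by
      funext x
      rw [tsum_mul_left, (aux_summable_trans hN2 x).2]
    rw [heq]
    exact (aux_summable_base hcN2).mul_right _
set_option maxHeartbeats 1600000 in
theorem aux_main_thm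
    (m : ℕ) (hm : 0 < m) (n : ℕ) (hn : 1 ≤ n)
    (U V : Set R2) (hUV : Transverse U V)
    (S : ℕ → Z2 → Z2 → Matrix (Fin m) (Fin m) ℂ)
    (hHerm : ∀ j < n, ∀ x y : Z2, S j x y = Matrix.conjTranspose (S j y x))
    (hPSR : ∀ j < n, IsPSRker (S j))
    (p : ℕ) (hp : p < n)
    (hSp : ∀ N : ℝ, 0 < N → ∃ C : ℝ, 0 < C ∧ ∀ x y : Z2,
      matNorm (S p x y) ≤ C * Real.exp (-N * dlS (emb x) (frontier U)
        - N * dlS (emb y) (frontier U)))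
    (q : ℕ) (hq : q < n)
    (hSq : ∀ N : ℝ, 0 < N → ∃ C : ℝ, 0 < C ∧ ∀ x y : Z2,
      matNorm (S q x y) ≤ C * Real.exp (-N * dlS (emb x) (frontier V)
        - N * dlS (emb y) (frontier V))) :
    (∀ k : ℕ, k + 1 < n → ∀ x y : Z2,
      Summable fun z : Z2 => matNorm (PP S k x z * S (k + 1) z y)) ∧
    Summable (fun xy : Z2 × Z2 => matNorm (PP S (n - 1) xy.1 xy.2)) := by
  classical
  -- weighted bound for each individual kernel
  have hstep : ∀ j, j < n → WtB (S j) (svt (frontier U) (frontier V) p q j) := by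
    intro j hj
    have hd1 : DecB (S j) (fun x => if p = j then awt (frontier U) x else 1) := by
      by_cases h : p = j
      · subst h
        exact aux_DecB_congr (aux_DecB_of_exp hSp) (fun x => by simp)
      · exact aux_DecB_congr (aux_DecB_one (hPSR j hj)) (fun x => by simp [h])
    have hd2 : DecB (S j) (fun x => if q = j then awt (frontier V) x else 1) := by
      by_cases h : q = j
      · subst h
        exact aux_DecB_congr (aux_DecB_of_exp hSq) (fun x => by simp)
      · exact aux_DecB_congr (aux_DecB_one (hPSR j hj)) (fun x => by simp [h])
    have hnn1 : ∀ x : Z2, 0 ≤ if p = j then awt (frontier U) x else 1 := by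
      intro x
      by_cases h : p = j <;> simp [h]
      linarith [aux_awt_one_le (frontier U) x]
    have hnn2 : ∀ x : Z2, 0 ≤ if q = j then awt (frontier V) x else 1 := by
      intro x
      by_cases h : q = j <;> simp [h]
      linarith [aux_awt_one_le (frontier V) x]
    have hdec : DecB (S j) (svt (frontier U) (frontier V) p q j) :=
      aux_DecB_congr (aux_DecB_mul hnn1 hnn2 hd1 hd2) (fun x => rfl)
    exact aux_WtB_of (fun x => by
      linarith [aux_svt_one_le (frontier U) (frontier V) p q j x]) (hPSR j hj) hdec
  -- main induction
  have hmain : ∀ k, k < n → WtB (PP S k) (wgt (frontier U) (frontier V) p q k) := by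
    intro k
    induction k with
    | zero =>
      intro hk
      exact aux_WtB_congr (hstep 0 hk) (fun x => (aux_wgt_zero _ _ p q x).symm)
    | succ k ih =>
      intro hk
      have hA := ih (by omega)
      have hB := hstep (k + 1) hk
      have hconv := aux_conv (aux_wgt_one_le _ _ p q k) (aux_svt_one_le _ _ p q (k + 1))
        (aux_svt_lip _ _ p q (k + 1)) hA hB
      exact aux_WtB_congr hconv.2 (fun x => (aux_wgt_succ _ _ p q k x).symm)
  constructor
  · intro k hk x y
    have hA := hmain k (by omega)
    have hB := hstep (k + 1) hk
    exact (aux_conv (aux_wgt_one_le _ _ p q k) (aux_svt_one_le _ _ p q (k + 1))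
      (aux_svt_lip _ _ p q (k + 1)) hA hB).1 x y
  · obtain ⟨c, hc0, hc1, htr⟩ := hUV
    obtain ⟨N, hNdef⟩ : ∃ N : ℝ, N = 2 / c + 3 := ⟨_, rfl⟩
    have hc2 : 0 < 2 / c := by positivity
    have hN : 0 < N := by rw [hNdef]; linarith
    have hN2 : 2 < N := by rw [hNdef]; linarith
    have hcN : c * N = 2 + 3 * c := by rw [hNdef]; field_simp
    have hcN2 : 2 < c * N := by rw [hcN]; linarith
    have hpk : p ≤ n - 1 := by omega
    have hqk : q ≤ n - 1 := by omega
    obtain ⟨C, hC, H⟩ := hmain (n - 1) (by omega) N hN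
    obtain ⟨D, hDdef⟩ : ∃ D : ℝ, D = (4 + 2 / c) ^ (c * N) := ⟨_, rfl⟩
    have hDpos : 0 < D := by
      rw [hDdef]; exact Real.rpow_pos_of_pos (by linarith) _
    have hbd : ∀ x y : Z2, matNorm (PP S (n - 1) x y) ≤
        (C * D) * ((1 + (|(x.1 : ℝ)| + |(x.2 : ℝ)|)) ^ (-(c * N)) *
          (1 + d1 (emb x) (emb y)) ^ (-N)) := by
      intro x y
      have h1 := H x y
      rw [aux_wgt_final _ _ hpk hqk] at h1
      have h2 := aux_psi_bound hc0 hc1 htr hN x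
      have hu0 : (0:ℝ) ≤ (1 + d1 (emb x) (emb y)) ^ (-N) :=
        Real.rpow_nonneg (by nlinarith [aux_d1_nonneg (emb x) (emb y)]) _
      calc matNorm (PP S (n - 1) x y)
          ≤ C * ((1 + d1 (emb x) (emb y)) ^ (-N) *
              (awt (frontier U) x * awt (frontier V) x) ^ (-N)) := h1
        _ ≤ C * ((1 + d1 (emb x) (emb y)) ^ (-N) *
              (D * (1 + (|(x.1 : ℝ)| + |(x.2 : ℝ)|)) ^ (-(c * N)))) := by
            apply mul_le_mul_of_nonneg_left ?_ hC.le
            apply mul_le_mul_of_nonneg_left ?_ hu0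
            rw [hDdef]
            exact h2
        _ = (C * D) * ((1 + (|(x.1 : ℝ)| + |(x.2 : ℝ)|)) ^ (-(c * N)) *
              (1 + d1 (emb x) (emb y)) ^ (-N)) := by ring
    have hG := aux_final_sum hN2 hcN2
    exact Summable.of_nonneg_of_le
      (g := fun xy : Z2 × Z2 => matNorm (PP S (n - 1) xy.1 xy.2))
      (f := fun xy : Z2 × Z2 => (C * D) * ((1 + (|(xy.1.1 : ℝ)| + |(xy.1.2 : ℝ)|)) ^ (-(c * N)) *
        (1 + d1 (emb xy.1) (emb xy.2)) ^ (-N)))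
      (fun xy => aux_matNorm_nonneg _) (fun xy => hbd xy.1 xy.2) (hG.mul_left (C * D))

/-- Corollary 2.5: an iterated product of Hermitian PSR kernels, two
of which decay rapidly away from ∂U resp. ∂V with U, V transverse, is the kernel of a
trace-class operator; the kernels are indexed by 0,…,n−1. -/
theorem kernel_product_trace_class
    (m : ℕ) (hm : 0 < m) (n : ℕ) (hn : 1 ≤ n)
    (U V : Set R2) (hUV : Transverse U V)
    (S : ℕ → Z2 → Z2 → Matrix (Fin m) (Fin m) ℂ)
    (hHerm : ∀ j < n, ∀ x y : Z2, S j x y = Matrix.conjTranspose (S j y x))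
    (hPSR : ∀ j < n, IsPSRker (S j))
    (p : ℕ) (hp : p < n)
    (hSp : ∀ N : ℝ, 0 < N → ∃ C : ℝ, 0 < C ∧ ∀ x y : Z2,
      matNorm (S p x y) ≤ C * Real.exp (-N * dlS (emb x) (frontier U)
        - N * dlS (emb y) (frontier U)))
    (q : ℕ) (hq : q < n)
    (hSq : ∀ N : ℝ, 0 < N → ∃ C : ℝ, 0 < C ∧ ∀ x y : Z2,
      matNorm (S q x y) ≤ C * Real.exp (-N * dlS (emb x) (frontier V)
        - N * dlS (emb y) (frontier V))) :
    (∀ k : ℕ, k + 1 < n → ∀ x y : Z2,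
      Summable fun z : Z2 => matNorm (PP S k x z * S (k + 1) z y)) ∧
    Summable (fun xy : Z2 × Z2 => matNorm (PP S (n - 1) xy.1 xy.2)) := by
  exact aux_main_thm m hm n hn U V hUV S hHerm hPSR p hp hSp q hq hSq

end
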